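/- Let d ≥ 1 and let σ, γ ∈ S_d satisfy γ² = id and γ∘σ∘γ = σ⁻¹. Let c₁ and c₂ be two distinct cycle factors of σ, each satisfying γ∘cᵢ∘γ = cᵢ⁻¹ and with no fixed point of γ in its support, with supports of even cardinalities e′ and e respectively. Fix positive even integers e₁′, e₂′ with e₁′ + e₂′ = e′. Then the number of 3-cycles τ ∈ S_d whose support meets the support of c₁ in exactly two points and the support of c₂ in exactly one point, satisfying γ∘(τ∘σ)∘γ = (τ∘σ)⁻¹, and such that τ∘σ has exactly two cycle factors supported inside the union of the supports of c₁ and c₂ — one with support of cardinality e₁′ disjoint from the support of c₂, and one with support of cardinality e₂′ + e containing the support of c₂ — equals 4. -/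

import Mathlib

open Equiv Equiv.Perm

theorem Equiv.Perm.apply_inv_self {α : Type*} (f : Perm α) (x : α) : f (f⁻¹ x) = x :=
  f.apply_symm_apply x

section RealHelpers
open List
set_option linter.unusedSectionVars false

variable {α : Type*} [Fintype α] [DecidableEq α]

-- orbit lemmas
lemma orb_pow_mod (c : Perm α) (hc : c.IsCycle) (a : α) (i : ℕ) :
    (c ^ (i % c.support.card)) a = (c ^ i) a := by
  rw [← hc.orderOf, pow_mod_orderOf]

lemma orb_inj (c : Perm α) (hc : c.IsCycle) {a : α} (ha : a ∈ c.support) {i j : ℕ}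
    (hi : i < c.support.card) (hj : j < c.support.card) (h : (c ^ i) a = (c ^ j) a) : i = j := by
  wlog hij : i ≤ j generalizing i j
  · exact (this hj hi h.symm (by omega)).symm
  by_contra hne
  have h1 : (c ^ (j - i)) a = a := by
    have : (c ^ i) ((c ^ (j - i)) a) = (c ^ i) a := by
      rw [← mul_apply, ← pow_add]
      have hij' : i + (j - i) = j := by omega
      rw [hij', h]
    exact (c ^ i).injective this
  have hmoves : c a ≠ a := mem_support.mp ha
  have : c ^ (j - i) = 1 := (hc.pow_eq_one_iff' hmoves).mpr h1
  have := orderOf_dvd_of_pow_eq_one this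
  rw [hc.orderOf] at this
  have := Nat.le_of_dvd (by omega) this
  omega

lemma orb_surj (c : Perm α) (hc : c.IsCycle) {a z : α} (ha : a ∈ c.support)
    (hz : z ∈ c.support) : ∃ i < c.support.card, (c ^ i) a = z := by
  obtain ⟨i, hi⟩ := hc.exists_pow_eq (mem_support.mp ha) (mem_support.mp hz)
  refine ⟨i % c.support.card, Nat.mod_lt _ ?_, by rw [orb_pow_mod c hc, hi]⟩
  have := hc.two_le_card_support
  omega

lemma orb_eq_iff (c : Perm α) (hc : c.IsCycle) {a : α} (ha : a ∈ c.support) {i j : ℕ} :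
    (c ^ i) a = (c ^ j) a ↔ i % c.support.card = j % c.support.card := by
  constructor
  · intro h
    have h2 : (c ^ (i % c.support.card)) a = (c ^ (j % c.support.card)) a := by
      rw [orb_pow_mod c hc, orb_pow_mod c hc, h]
    have hpos : 0 < c.support.card := by have := hc.two_le_card_support; omega
    exact orb_inj c hc ha (Nat.mod_lt _ hpos) (Nat.mod_lt _ hpos) h2
  · intro h
    rw [← orb_pow_mod c hc a i, ← orb_pow_mod c hc a j, h]

lemma orb_mem (c : Perm α) {a : α} (ha : a ∈ c.support) (i : ℕ) : (c ^ i) a ∈ c.support :=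
  pow_apply_mem_support.mpr ha

-- conjugation helpers
lemma conj_apply_pow (c γ : Perm α) (hγ : γ * γ = 1) (hre : γ * c * γ = c⁻¹) (i : ℕ) (x : α) :
    γ ((c ^ i) x) = ((c ^ i)⁻¹) (γ x) := by
  have hγinv : γ⁻¹ = γ := inv_eq_of_mul_eq_one_right hγ
  have h : γ * c ^ i * γ = (c ^ i)⁻¹ := by
    have h0 : (γ * c * γ⁻¹) ^ i = γ * c ^ i * γ⁻¹ := conj_pow
    rw [hγinv, hre] at h0
    rw [← h0, inv_pow]
  have e1 : γ (γ x) = x := by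
    have := congrArg (fun p : Perm α => p x) hγ
    simpa [mul_apply] using this
  calc γ ((c ^ i) x) = (γ * c ^ i * γ) (γ x) := by simp [mul_apply, e1]
    _ = ((c ^ i)⁻¹) (γ x) := by rw [h]

lemma gamma_mem_support (c γ : Perm α) (hγ : γ * γ = 1) (hre : γ * c * γ = c⁻¹) {x : α}
    (hx : x ∈ c.support) : γ x ∈ c.support := by
  have h := conj_apply_pow c γ hγ hre 1 x
  simp only [pow_one] at h
  rw [mem_support] at hx ⊢
  intro hfix
  apply hx
  have h2 : c⁻¹ (γ x) = γ x := by apply c.injective; simp [hfix]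
  have : γ (c x) = γ x := by rw [h, h2]
  exact γ.injective this

lemma modeq_cases {a b n : ℕ} (h : a % n = b % n) (ha : a < 2 * n) (hb : b < 2 * n) :
    a = b ∨ a = b + n ∨ b = a + n := by
  have hn : 0 < n := by omega
  have h1 := Nat.div_add_mod a n
  have h2 := Nat.div_add_mod b n
  have ha2 : a / n < 2 := Nat.div_lt_of_lt_mul (by omega)
  have hb2 : b / n < 2 := Nat.div_lt_of_lt_mul (by omega)
  interval_cases h3 : a / n <;> interval_cases h4 : b / n <;> omega

lemma modeq_of_cases {a b n : ℕ} (h : a = b ∨ a = b + n ∨ b = a + n) : a % n = b % n := by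
  rcases h with rfl | rfl | rfl
  · rfl
  · rw [Nat.add_mod_right]
  · rw [Nat.add_mod_right]

lemma key_count (c γ : Perm α) (hc : c.IsCycle) (hγ : γ * γ = 1) (hre : γ * c * γ = c⁻¹)
    (hev : Even c.support.card) (hnf : ∀ x ∈ c.support, γ x ≠ x) (u : ℕ) (hu : Odd u)
    (hun : u < c.support.card) :
    (c.support.filter (fun x => γ x = (c ^ u) x)).card = 2 := by
  set n := c.support.card with hn
  have hn2 : 2 ≤ n := hc.two_le_card_support
  obtain ⟨a₀, ha₀⟩ := hc.nonempty_support
  obtain ⟨k, hk, hka⟩ := orb_surj c hc ha₀ (gamma_mem_support c γ hγ hre ha₀)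
  -- k is odd
  have hkodd : Odd k := by
    rw [Nat.odd_iff]
    by_contra hke
    have hke' : k % 2 = 0 := by omega
    obtain ⟨w, hw⟩ : ∃ w, k = w + w := ⟨k / 2, by omega⟩
    apply hnf ((c ^ w) a₀) (orb_mem c ha₀ w)
    rw [conj_apply_pow c γ hγ hre, ← hka, hw, pow_add]
    simp [mul_apply]
  -- characterization of solutions
  have hchar : ∀ s < n, ((γ ((c ^ s) a₀) = (c ^ u) ((c ^ s) a₀)) ↔
      (2 * s) % n = (k + n - u) % n) := by
    intro s hs
    rw [conj_apply_pow c γ hγ hre, ← hka]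
    have hinv : ((c ^ s)⁻¹) ((c ^ k) a₀) = (c ^ (n - s + k)) a₀ := by
      apply (c ^ s).injective
      simp only [Equiv.Perm.apply_inv_self]
      rw [← mul_apply, ← pow_add]
      apply (orb_eq_iff c hc ha₀).mpr
      have he : s + (n - s + k) = n + k := by omega
      rw [he]
      exact (Nat.add_mod_left n k).symm
    rw [hinv, ← mul_apply, ← pow_add]
    rw [orb_eq_iff c hc ha₀]
    constructor
    · intro h
      have := modeq_cases h (by omega) (by omega)
      exact modeq_of_cases (by omega)
    · intro h
      have := modeq_cases h (by omega) (by omega)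
      exact modeq_of_cases (by omega)
  -- parity bookkeeping
  have hk2 : k % 2 = 1 := Nat.odd_iff.mp hkodd
  have hu2 : u % 2 = 1 := Nat.odd_iff.mp hu
  have hnev : n % 2 = 0 := Nat.even_iff.mp hev
  set v := k + n - u with hv
  have hq : v / n < 2 := Nat.div_lt_of_lt_mul (by omega)
  have hdm := Nat.div_add_mod v n
  have htn : v % n < n := Nat.mod_lt _ (by omega)
  have htev : v % n % 2 = 0 := by
    interval_cases h5 : v / n <;> omega
  set t := v % n with ht
  set s₁ := t / 2 with hs₁
  set s₂ := t / 2 + n / 2 with hs₂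
  have hs₁n : s₁ < n := by omega
  have hs₂n : s₂ < n := by omega
  have hx12 : (c ^ s₁) a₀ ≠ (c ^ s₂) a₀ := by
    intro h
    have := orb_inj c hc ha₀ hs₁n hs₂n h
    omega
  have hfe : c.support.filter (fun x => γ x = (c ^ u) x) = {(c ^ s₁) a₀, (c ^ s₂) a₀} := by
    ext x
    simp only [Finset.mem_filter, Finset.mem_insert, Finset.mem_singleton]
    constructor
    · rintro ⟨hxs, hcond⟩
      obtain ⟨s, hsn, rfl⟩ := orb_surj c hc ha₀ hxs
      have h2 := (hchar s hsn).mp hcond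
      have h3 : (2 * s) % n = t % n := by rw [h2, Nat.mod_eq_of_lt htn]
      have := modeq_cases h3 (by omega) (by omega)
      have : s = s₁ ∨ s = s₂ := by omega
      rcases this with rfl | rfl
      · exact Or.inl rfl
      · exact Or.inr rfl
    · rintro (rfl | rfl)
      · refine ⟨orb_mem c ha₀ _, (hchar s₁ hs₁n).mpr ?_⟩
        rw [Nat.mod_eq_of_lt (show 2 * s₁ < n by omega)]
        omega
      · refine ⟨orb_mem c ha₀ _, (hchar s₂ hs₂n).mpr ?_⟩
        have h4 : 2 * s₂ = t + n := by omega
        rw [h4, Nat.add_mod_right, Nat.mod_eq_of_lt htn]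
  rw [hfe, Finset.card_insert_of_notMem (by simpa using hx12), Finset.card_singleton]

section S2
variable {α : Type*} [Fintype α] [DecidableEq α]

lemma structure_lemma (σ c₁ c₂ : Perm α)
    (h₁ : c₁ ∈ σ.cycleFactorsFinset) (h₂ : c₂ ∈ σ.cycleFactorsFinset) (h12 : c₁ ≠ c₂)
    {a y : α} (ha : a ∈ c₁.support) (hy : y ∈ c₂.support)
    (s : ℕ) (hs0 : 0 < s) (hsm : s < c₁.support.card) :
    ∃ B : Perm α,
      B.support.card = s + c₂.support.card ∧ c₂.support ⊆ B.support ∧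
      ((s + 1 = c₁.support.card →
          ((swap a y * swap a ((c₁ ^ s) a) * σ).cycleFactorsFinset.filter
            (fun f => f.support ⊆ c₁.support ∪ c₂.support)) = {B}) ∧
       (s + 1 < c₁.support.card →
          ∃ A : Perm α, A ≠ B ∧
            ((swap a y * swap a ((c₁ ^ s) a) * σ).cycleFactorsFinset.filter
              (fun f => f.support ⊆ c₁.support ∪ c₂.support)) = {A, B} ∧
            A.support.card = c₁.support.card - s ∧ Disjoint A.support c₂.support)) := by
  classical
  set m := c₁.support.card with hm
  set e := c₂.support.card with he
  obtain ⟨hc₁, hagree₁⟩ := mem_cycleFactorsFinset_iff.mp h₁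
  obtain ⟨hc₂, hagree₂⟩ := mem_cycleFactorsFinset_iff.mp h₂
  have he2 : 2 ≤ e := hc₂.two_le_card_support
  have hdisj : Disjoint c₁.support c₂.support := by
    have := σ.cycleFactorsFinset_pairwise_disjoint (Finset.mem_coe.mpr h₁)
      (Finset.mem_coe.mpr h₂) h12
    exact this.disjoint_support
  set b := (c₁ ^ s) a with hbdef
  have hb : b ∈ c₁.support := orb_mem c₁ ha s
  have hyn1 : y ∉ c₁.support := fun h => (Finset.disjoint_left.mp hdisj h) hy
  have hay : a ≠ y := fun h => hyn1 (h ▸ ha)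
  have hby : b ≠ y := fun h => hyn1 (h ▸ hb)
  have hab : a ≠ b := by
    intro h
    have : (c₁ ^ 0) a = (c₁ ^ s) a := by simpa using h
    have := orb_inj c₁ hc₁ ha (by omega) hsm this
    omega
  set τ := swap a y * swap a b with hτ
  have hτa : τ a = b := by
    rw [hτ, mul_apply, swap_apply_left, swap_apply_of_ne_of_ne (Ne.symm hab) hby]
  have hτb : τ b = y := by
    rw [hτ, mul_apply, swap_apply_right, swap_apply_left]
  have hτy : τ y = a := by
    rw [hτ, mul_apply, swap_apply_of_ne_of_ne (Ne.symm hay) (Ne.symm hby), swap_apply_right]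
  have hτfix : ∀ z, z ≠ a → z ≠ b → z ≠ y → τ z = z := by
    intro z h1 h2 h3
    rw [hτ, mul_apply, swap_apply_of_ne_of_ne h1 h2, swap_apply_of_ne_of_ne h1 h3]
  have hσp₁ : ∀ i, σ ((c₁ ^ i) a) = (c₁ ^ (i + 1)) a := by
    intro i
    rw [← hagree₁ _ (orb_mem c₁ ha i), ← mul_apply, ← pow_succ']
  have hσp₂ : ∀ i, σ ((c₂ ^ i) y) = (c₂ ^ (i + 1)) y := by
    intro i
    rw [← hagree₂ _ (orb_mem c₂ hy i), ← mul_apply, ← pow_succ']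
  have hm1 : c₁ ^ m = 1 := by rw [hm, ← hc₁.orderOf]; exact pow_orderOf_eq_one c₁
  have he1 : c₂ ^ e = 1 := by rw [he, ← hc₂.orderOf]; exact pow_orderOf_eq_one c₂
  -- the list for the cycle B
  set LB : List α := ((List.range s).map fun i => (c₁ ^ i) a) ++
      ((List.range e).map fun i => (c₂ ^ i) y) with hLB
  have lenB : LB.length = s + e := by simp [hLB]
  have getB : ∀ i (hi : i < s + e),
      LB[i]'(by omega) = if i < s then (c₁ ^ i) a else (c₂ ^ (i - s)) y := by
    intro i hi
    by_cases h : i < s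
    · rw [List.getElem_append_left (by simpa using h)]
      simp [h]
    · rw [List.getElem_append_right (by simpa using h)]
      simp [h]
  have nodupB : LB.Nodup := by
    rw [hLB, List.nodup_append]
    refine ⟨?_, ?_, ?_⟩
    · apply List.Nodup.map_on _ List.nodup_range
      intro i hi j hj hij
      exact orb_inj c₁ hc₁ ha (by simp at hi; omega) (by simp at hj; omega) hij
    · apply List.Nodup.map_on _ List.nodup_range
      intro i hi j hj hij
      exact orb_inj c₂ hc₂ hy (by simp at hi; omega) (by simp at hj; omega) hij
    · intro x hx1 _ hx2 rfl
      simp only [List.mem_map, List.mem_range] at hx1 hx2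
      obtain ⟨i, hi, rfl⟩ := hx1
      obtain ⟨j, hj, hj2⟩ := hx2
      exact (Finset.disjoint_left.mp hdisj (orb_mem c₁ ha i)) (hj2 ▸ orb_mem c₂ hy j)
  set B := LB.formPerm with hB
  have hBcyc : B.IsCycle := List.isCycle_formPerm nodupB (by omega)
  have hBsupp : B.support = LB.toFinset := by
    apply List.support_formPerm_of_nodup _ nodupB
    intro x hx
    apply_fun List.length at hx
    simp at hx
    omega
  have hBcard : B.support.card = s + e := by
    rw [hBsupp, List.toFinset_card_of_nodup nodupB, lenB]
  have hne_a : ∀ t, 0 < t → t < m → (c₁ ^ t) a ≠ a := by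
    intro t ht0 htm h
    have h' : (c₁ ^ t) a = (c₁ ^ 0) a := by simpa using h
    have := orb_inj c₁ hc₁ ha htm (by omega) h'
    omega
  have hne_b : ∀ t, t < m → t ≠ s → (c₁ ^ t) a ≠ b := by
    intro t htm hts h
    exact hts (orb_inj c₁ hc₁ ha htm hsm h)
  have hne_y : ∀ t, (c₁ ^ t) a ≠ y := fun t h => hyn1 (h ▸ orb_mem c₁ ha t)
  have han2 : a ∉ c₂.support := fun h => (Finset.disjoint_left.mp hdisj ha) h
  have hbn2 : b ∉ c₂.support := fun h => (Finset.disjoint_left.mp hdisj hb) h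
  have hne2_a : ∀ t, (c₂ ^ t) y ≠ a := fun t h => han2 (h ▸ orb_mem c₂ hy t)
  have hne2_b : ∀ t, (c₂ ^ t) y ≠ b := fun t h => hbn2 (h ▸ orb_mem c₂ hy t)
  have hne2_y : ∀ t, 0 < t → t < e → (c₂ ^ t) y ≠ y := by
    intro t ht0 hte h
    have h' : (c₂ ^ t) y = (c₂ ^ 0) y := by simpa using h
    have := orb_inj c₂ hc₂ hy hte (by omega) h'
    omega
  have hstep : ∀ i (hi : i < s + e),
      (τ * σ) (LB[i]'(by rw [lenB]; omega)) =
        LB[(i + 1) % (s + e)]'(by rw [lenB]; exact Nat.mod_lt _ (by omega)) := by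
    intro i hi
    have hmod : (i + 1) % (s + e) < s + e := Nat.mod_lt _ (by omega)
    rw [getB i hi, getB _ hmod]
    by_cases h1 : i + 1 < s
    · rw [if_pos (by omega), Nat.mod_eq_of_lt (by omega), if_pos h1]
      rw [mul_apply, hσp₁]
      exact hτfix _ (hne_a _ (by omega) (by omega)) (hne_b _ (by omega) (by omega)) (hne_y _)
    · by_cases h2 : i + 1 = s
      · rw [if_pos (by omega), Nat.mod_eq_of_lt (by omega), if_neg (by omega)]
        rw [mul_apply, hσp₁, h2]
        simpa [hbdef] using hτb
      · by_cases h3 : i + 1 < s + e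
        · rw [if_neg (by omega), Nat.mod_eq_of_lt (by omega), if_neg (by omega)]
          rw [mul_apply, hσp₂]
          have h5 : i - s + 1 = i + 1 - s := by omega
          rw [h5]
          exact hτfix _ (hne2_a _) (hne2_b _) (hne2_y _ (by omega) (by omega))
        · have h4 : i + 1 = s + e := by omega
          rw [if_neg (by omega), h4, Nat.mod_self, if_pos (by omega)]
          rw [mul_apply, hσp₂]
          have h5 : i - s + 1 = e := by omega
          rw [h5, he1]
          simpa using hτy
  have hBfac : B ∈ (τ * σ).cycleFactorsFinset := by
    refine mem_cycleFactorsFinset_iff.mpr ⟨hBcyc, ?_⟩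
    intro x hx
    rw [hBsupp, List.mem_toFinset] at hx
    obtain ⟨i, hilen, rfl⟩ := List.mem_iff_getElem.mp hx
    have hi : i < s + e := by rw [lenB] at hilen; exact hilen
    rw [List.formPerm_apply_getElem _ nodupB i hilen]
    simp only [lenB]
    exact (hstep i hi).symm
  have hS₂B : c₂.support ⊆ B.support := by
    intro z hz
    obtain ⟨r, hr, rfl⟩ := orb_surj c₂ hc₂ hy hz
    rw [hBsupp, List.mem_toFinset]
    have h6 : LB[s + r]'(by rw [lenB]; omega) = (c₂ ^ r) y := by
      rw [getB (s + r) (by omega), if_neg (by omega)]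
      have h7 : s + r - s = r := by omega
      rw [h7]
    rw [← h6]
    exact List.getElem_mem _
  have hBsub : B.support ⊆ c₁.support ∪ c₂.support := by
    rw [hBsupp]
    intro z hz
    rw [List.mem_toFinset, hLB, List.mem_append] at hz
    rcases hz with hz | hz <;> simp only [List.mem_map, List.mem_range] at hz
    · obtain ⟨i, hi, rfl⟩ := hz
      exact Finset.mem_union_left _ (orb_mem c₁ ha i)
    · obtain ⟨i, hi, rfl⟩ := hz
      exact Finset.mem_union_right _ (orb_mem c₂ hy i)
  refine ⟨B, hBcard, hS₂B, ?_, ?_⟩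
  · -- degenerate case
    intro hdeg
    ext f
    simp only [Finset.mem_filter, Finset.mem_singleton]
    constructor
    · rintro ⟨hf, hfs⟩
      obtain ⟨z, hz⟩ := (mem_cycleFactorsFinset_iff.mp hf).1.nonempty_support
      have hzu := hfs hz
      have hzB : z ∈ B.support := by
        rcases Finset.mem_union.mp hzu with hz1 | hz2
        · obtain ⟨t, htm, rfl⟩ := orb_surj c₁ hc₁ ha hz1
          by_cases hts : t < s
          · rw [hBsupp, List.mem_toFinset]
            have h8 := getB t (by omega)
            rw [if_pos hts] at h8
            rw [← h8]
            exact List.getElem_mem _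
          · have hts' : t = s := by omega
            exfalso
            have hzsupp : (c₁ ^ t) a ∈ (τ * σ).support :=
              mem_cycleFactorsFinset_support_le hf hz
            have hfix : (τ * σ) ((c₁ ^ t) a) = (c₁ ^ t) a := by
              rw [mul_apply, hσp₁]
              have h9 : t + 1 = m := by omega
              rw [h9, hm1, hts']
              simpa [hbdef] using hτa
            rw [mem_support] at hzsupp
            exact hzsupp hfix
        · exact hS₂B hz2
      have e1 := cycle_is_cycleOf hz hf
      have e2 := cycle_is_cycleOf hzB hBfac
      rw [e1, e2]
    · rintro rfl
      exact ⟨hBfac, hBsub⟩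
  · -- nondegenerate case
    intro hlt
    set LA : List α := (List.range (m - s)).map fun i => (c₁ ^ (s + i)) a with hLA
    have lenA : LA.length = m - s := by simp [hLA]
    have getA : ∀ i (hi : i < m - s), LA[i]'(by rw [lenA]; omega) = (c₁ ^ (s + i)) a := by
      intro i hi
      simp [hLA]
    have nodupA : LA.Nodup := by
      apply List.Nodup.map_on _ List.nodup_range
      intro i hi j hj hij
      simp only [List.mem_range] at hi hj
      have := orb_inj c₁ hc₁ ha (by omega) (by omega) hij
      omega
    set A := LA.formPerm with hA
    have hAcyc : A.IsCycle := List.isCycle_formPerm nodupA (by omega)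
    have hAsupp : A.support = LA.toFinset := by
      apply List.support_formPerm_of_nodup _ nodupA
      intro x hx
      apply_fun List.length at hx
      simp at hx
      omega
    have hAcard : A.support.card = m - s := by
      rw [hAsupp, List.toFinset_card_of_nodup nodupA, lenA]
    have hAsub1 : A.support ⊆ c₁.support := by
      rw [hAsupp]
      intro z hz
      rw [List.mem_toFinset, hLA] at hz
      simp only [List.mem_map, List.mem_range] at hz
      obtain ⟨i, hi, rfl⟩ := hz
      exact orb_mem c₁ ha _
    have hAdisj : Disjoint A.support c₂.support := by
      rw [Finset.disjoint_left]
      intro x hx hx2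
      exact (Finset.disjoint_left.mp hdisj (hAsub1 hx)) hx2
    have hstepA : ∀ i (hi : i < m - s),
        (τ * σ) (LA[i]'(by rw [lenA]; omega)) =
          LA[(i + 1) % (m - s)]'(by rw [lenA]; exact Nat.mod_lt _ (by omega)) := by
      intro i hi
      have hmod : (i + 1) % (m - s) < m - s := Nat.mod_lt _ (by omega)
      rw [getA i hi, getA ((i + 1) % (m - s)) hmod]
      rw [mul_apply, hσp₁]
      by_cases h1 : i + 1 < m - s
      · have h5 : (i + 1) % (m - s) = i + 1 := Nat.mod_eq_of_lt h1
        rw [h5]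
        have h6 : s + i + 1 = s + (i + 1) := by omega
        rw [h6]
        exact hτfix _ (hne_a _ (by omega) (by omega)) (hne_b _ (by omega) (by omega)) (hne_y _)
      · have h4 : i + 1 = m - s := by omega
        have h5 : (i + 1) % (m - s) = 0 := by rw [h4, Nat.mod_self]
        rw [h5]
        have h6 : s + i + 1 = m := by omega
        rw [h6, hm1]
        have h7 : s + 0 = s := by omega
        rw [h7]
        simpa [hbdef] using hτa
    have hAfac : A ∈ (τ * σ).cycleFactorsFinset := by
      refine mem_cycleFactorsFinset_iff.mpr ⟨hAcyc, ?_⟩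
      intro x hx
      rw [hAsupp, List.mem_toFinset] at hx
      obtain ⟨i, hilen, rfl⟩ := List.mem_iff_getElem.mp hx
      have hi : i < m - s := by rw [lenA] at hilen; exact hilen
      rw [List.formPerm_apply_getElem _ nodupA i hilen]
      simp only [lenA]
      exact (hstepA i hi).symm
    have hABdisj : Disjoint A.support B.support := by
      rw [Finset.disjoint_left]
      intro x hx hxB
      rw [hAsupp, List.mem_toFinset, hLA] at hx
      simp only [List.mem_map, List.mem_range] at hx
      obtain ⟨i, hi, rfl⟩ := hx
      rw [hBsupp, List.mem_toFinset, hLB, List.mem_append] at hxB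
      rcases hxB with hxB | hxB <;> simp only [List.mem_map, List.mem_range] at hxB
      · obtain ⟨j, hj, hj2⟩ := hxB
        have := orb_inj c₁ hc₁ ha (by omega) (by omega) hj2.symm
        omega
      · obtain ⟨j, hj, hj2⟩ := hxB
        exact (Finset.disjoint_left.mp hdisj (orb_mem c₁ ha _)) (hj2 ▸ orb_mem c₂ hy j)
    have hAneB : A ≠ B := by
      intro h
      obtain ⟨z, hz⟩ := hAcyc.nonempty_support
      exact (Finset.disjoint_left.mp hABdisj hz) (h ▸ hz)
    refine ⟨A, hAneB, ?_, hAcard, hAdisj⟩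
    ext f
    simp only [Finset.mem_filter, Finset.mem_insert, Finset.mem_singleton]
    constructor
    · rintro ⟨hf, hfs⟩
      obtain ⟨z, hz⟩ := (mem_cycleFactorsFinset_iff.mp hf).1.nonempty_support
      have hzu := hfs hz
      have hzAB : z ∈ A.support ∨ z ∈ B.support := by
        rcases Finset.mem_union.mp hzu with hz1 | hz2
        · obtain ⟨t, htm, rfl⟩ := orb_surj c₁ hc₁ ha hz1
          by_cases hts : t < s
          · right
            rw [hBsupp, List.mem_toFinset]
            have h8 := getB t (by omega)
            rw [if_pos hts] at h8
            rw [← h8]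
            exact List.getElem_mem _
          · left
            rw [hAsupp, List.mem_toFinset]
            have h8 := getA (t - s) (by omega)
            have h9 : s + (t - s) = t := by omega
            rw [h9] at h8
            rw [← h8]
            exact List.getElem_mem _
        · right
          exact hS₂B hz2
      rcases hzAB with hzA | hzB
      · left
        rw [cycle_is_cycleOf hz hf, cycle_is_cycleOf hzA hAfac]
      · right
        rw [cycle_is_cycleOf hz hf, cycle_is_cycleOf hzB hBfac]
    · rintro (rfl | rfl)
      · exact ⟨hAfac, fun x hx => Finset.mem_union_left _ (hAsub1 hx)⟩
      · exact ⟨hBfac, hBsub⟩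
end S2

section S3
variable {α : Type*} [Fintype α] [DecidableEq α]

lemma swap_cycle_eq {p q r : α} (hpq : p ≠ q) (hpr : p ≠ r) (hqr : q ≠ r) :
    swap p r * swap p q = swap q p * swap q r := by
  ext z
  simp only [mul_apply, swap_apply_def]
  split_ifs <;> simp_all

lemma reality_iff (σ γ c₁ c₂ : Perm α) (hγ : γ * γ = 1) (hσ : γ * σ * γ = σ⁻¹)
    (h₁ : c₁ ∈ σ.cycleFactorsFinset) (h₂ : c₂ ∈ σ.cycleFactorsFinset) (h12 : c₁ ≠ c₂)
    (hre1 : γ * c₁ * γ = c₁⁻¹) (hre2 : γ * c₂ * γ = c₂⁻¹)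
    {a y : α} (ha : a ∈ c₁.support) (hy : y ∈ c₂.support)
    (s : ℕ) (hs0 : 0 < s) (hsm : s < c₁.support.card) :
    (γ * (swap a y * swap a ((c₁ ^ s) a) * σ) * γ = (swap a y * swap a ((c₁ ^ s) a) * σ)⁻¹)
      ↔ (γ a = (c₁ ^ (s - 1)) a ∧ γ y = (c₂ ^ (c₂.support.card - 1)) y) := by
  classical
  set m := c₁.support.card with hm
  set e := c₂.support.card with he
  obtain ⟨hc₁, hagree₁⟩ := mem_cycleFactorsFinset_iff.mp h₁
  obtain ⟨hc₂, hagree₂⟩ := mem_cycleFactorsFinset_iff.mp h₂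
  have hm2 : 2 ≤ m := hc₁.two_le_card_support
  have he2 : 2 ≤ e := hc₂.two_le_card_support
  have hdisj : Disjoint c₁.support c₂.support := by
    have := σ.cycleFactorsFinset_pairwise_disjoint (Finset.mem_coe.mpr h₁)
      (Finset.mem_coe.mpr h₂) h12
    exact this.disjoint_support
  set b := (c₁ ^ s) a with hbdef
  have hb : b ∈ c₁.support := orb_mem c₁ ha s
  have hyn1 : y ∉ c₁.support := fun h => (Finset.disjoint_left.mp hdisj h) hy
  have hay : a ≠ y := fun h => hyn1 (h ▸ ha)
  have hby : b ≠ y := fun h => hyn1 (h ▸ hb)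
  have hab : a ≠ b := by
    intro h
    have h' : (c₁ ^ 0) a = (c₁ ^ s) a := by simpa using h
    have := orb_inj c₁ hc₁ ha (by omega) hsm h'
    omega
  set τ := swap a y * swap a b with hτ
  have hγinv : γ⁻¹ = γ := inv_eq_of_mul_eq_one_right hγ
  have hσp₁ : ∀ i, σ ((c₁ ^ i) a) = (c₁ ^ (i + 1)) a := by
    intro i
    rw [← hagree₁ _ (orb_mem c₁ ha i), ← mul_apply, ← pow_succ']
  have hσp₂ : ∀ i, σ ((c₂ ^ i) y) = (c₂ ^ (i + 1)) y := by
    intro i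
    rw [← hagree₂ _ (orb_mem c₂ hy i), ← mul_apply, ← pow_succ']
  have hm1 : c₁ ^ m = 1 := by rw [hm, ← hc₁.orderOf]; exact pow_orderOf_eq_one c₁
  have he1 : c₂ ^ e = 1 := by rw [he, ← hc₂.orderOf]; exact pow_orderOf_eq_one c₂
  have hσinvb : σ⁻¹ b = (c₁ ^ (s - 1)) a := by
    apply σ.injective
    rw [Equiv.Perm.apply_inv_self, hσp₁]
    have h5 : s - 1 + 1 = s := by omega
    rw [h5]
  have hσinva : σ⁻¹ a = (c₁ ^ (m - 1)) a := by
    apply σ.injective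
    rw [Equiv.Perm.apply_inv_self, hσp₁]
    have h5 : m - 1 + 1 = m := by omega
    rw [h5, hm1]
    simp
  have hσinvy : σ⁻¹ y = (c₂ ^ (e - 1)) y := by
    apply σ.injective
    rw [Equiv.Perm.apply_inv_self, hσp₂]
    have h5 : e - 1 + 1 = e := by omega
    rw [h5, he1]
    simp
  have hτb : τ b = y := by
    rw [hτ, mul_apply, swap_apply_right, swap_apply_left]
  have hτy : τ y = a := by
    rw [hτ, mul_apply, swap_apply_of_ne_of_ne (Ne.symm hay) (Ne.symm hby), swap_apply_right]
  -- reduction to a condition on τ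
  have hEquiv : (γ * (τ * σ) * γ = (τ * σ)⁻¹) ↔ (γ * τ * γ = σ⁻¹ * τ⁻¹ * σ) := by
    have key : γ * (τ * σ) * γ = (γ * τ * γ) * σ⁻¹ := by
      rw [← hσ]
      have h7 : (γ * τ * γ) * (γ * σ * γ) = γ * τ * (γ * γ) * σ * γ := by group
      rw [h7, hγ, mul_one]
      group
    rw [key, mul_inv_rev]
    exact mul_inv_eq_iff_eq_mul
  rw [hEquiv]
  constructor
  · -- reality implies the conditions
    intro E
    have hsupτ : τ.support = {a, y, b} := by
      have h3c : IsThreeCycle (swap a y * swap a b) :=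
        isThreeCycle_swap_mul_swap_same hay hab (fun h => hby h.symm)
      have hcard : τ.support.card = 3 := by rw [hτ]; exact h3c.card_support
      have hma : a ∈ τ.support := by
        rw [mem_support, hτ, mul_apply, swap_apply_left, swap_apply_of_ne_of_ne (Ne.symm hab) hby]
        exact Ne.symm hab
      have hmy : y ∈ τ.support := by rw [mem_support, hτy]; exact hay
      have hmb : b ∈ τ.support := by rw [mem_support, hτb]; exact Ne.symm hby
      have hsub : ({a, y, b} : Finset α) ⊆ τ.support := by
        intro z hz
        simp only [Finset.mem_insert, Finset.mem_singleton] at hz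
        rcases hz with h | h | h
        · subst h; exact hma
        · subst h; exact hmy
        · subst h; exact hmb
      have hc3 : ({a, y, b} : Finset α).card = 3 := by
        rw [Finset.card_insert_of_notMem (by simp [hay, hab]),
          Finset.card_insert_of_notMem (Finset.notMem_singleton.mpr (Ne.symm hby)),
          Finset.card_singleton]
      exact (Finset.eq_of_subset_of_card_le hsub (by omega)).symm
    -- support equality from E
    have hsuppE : τ.support.map γ.toEmbedding = τ.support.map σ⁻¹.toEmbedding := by
      have h8 : (γ * τ * γ⁻¹).support = τ.support.map γ.toEmbedding := support_conj
      have h9 : (σ⁻¹ * τ⁻¹ * σ⁻¹⁻¹).support = τ⁻¹.support.map σ⁻¹.toEmbedding := support_conj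
      rw [hγinv] at h8
      rw [inv_inv, support_inv] at h9
      rw [← h8, ← h9, E]
  -- γ y = σ⁻¹ y
    have hgy' : γ y = σ⁻¹ y := by
      have hmem : γ y ∈ τ.support.map σ⁻¹.toEmbedding := by
        rw [← hsuppE]
        simp only [Finset.mem_map, Equiv.coe_toEmbedding]
        exact ⟨y, by rw [hsupτ]; simp, rfl⟩
      rw [hsupτ] at hmem
      simp only [Finset.map_insert, Finset.map_singleton, Finset.mem_insert,
        Finset.mem_singleton, Equiv.coe_toEmbedding] at hmem
      have hγy2 : γ y ∈ c₂.support := gamma_mem_support c₂ γ hγ hre2 hy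
      rcases hmem with h | h | h
      · exfalso
        rw [h, hσinva] at hγy2
        exact (Finset.disjoint_left.mp hdisj (orb_mem c₁ ha _)) hγy2
      · exact h
      · exfalso
        rw [h, hσinvb] at hγy2
        exact (Finset.disjoint_left.mp hdisj (orb_mem c₁ ha _)) hγy2
    constructor
    · -- evaluate E at γ y
      have hE2 := congrArg (fun p : Perm α => p (γ y)) E
      simp only [mul_apply] at hE2
      have hγγy : γ (γ y) = y := by
        have := congrArg (fun p : Perm α => p y) hγ
        simpa [mul_apply] using this
      rw [hγγy, hτy] at hE2
      rw [hgy'] at hE2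
      rw [Equiv.Perm.apply_inv_self] at hE2
      have hτinv : τ⁻¹ y = b := by
        apply τ.injective
        rw [Equiv.Perm.apply_inv_self, hτb]
      rw [hτinv, hσinvb] at hE2
      exact hE2
    · rw [hgy', hσinvy]
  · -- conditions imply reality
    rintro ⟨hga, hgy⟩
    have hgy' : γ y = σ⁻¹ y := by rw [hgy, hσinvy]
    have hga' : γ a = σ⁻¹ b := by rw [hga, hσinvb]
    have hgb' : γ b = σ⁻¹ a := by
      rw [hbdef, conj_apply_pow c₁ γ hγ hre1, hga, hσinva]
      apply (c₁ ^ s).injective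
      rw [Equiv.Perm.apply_inv_self, ← mul_apply, ← pow_add]
      apply (orb_eq_iff c₁ hc₁ ha).mpr
      apply modeq_of_cases
      right; right
      omega
    -- conjugation formulas
    have hswapconj : ∀ (g : Perm α) (u v : α), g * swap u v * g⁻¹ = swap (g u) (g v) :=
      fun g u v => (swap_apply_apply g u v).symm
    have hswapconjγ : ∀ u v : α, γ * swap u v * γ = swap (γ u) (γ v) := by
      intro u v
      have h := hswapconj γ u v
      rwa [hγinv] at h
    have hswapconjσ : ∀ u v : α, σ⁻¹ * swap u v * σ = swap (σ⁻¹ u) (σ⁻¹ v) := by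
      intro u v
      have h := hswapconj σ⁻¹ u v
      rwa [inv_inv] at h
    have hins : (γ * swap a y * γ) * (γ * swap a b * γ) = γ * (swap a y * swap a b) * γ := by
      have h' : (γ * swap a y * γ) * (γ * swap a b * γ) = γ * swap a y * (γ * γ) * swap a b * γ := by
        group
      rw [h', hγ, mul_one]
      group
    have hLHS : γ * τ * γ = swap (γ a) (γ y) * swap (γ a) (γ b) := by
      rw [hτ, ← hins, hswapconjγ, hswapconjγ]
    have hRHS : σ⁻¹ * τ⁻¹ * σ = swap (σ⁻¹ a) (σ⁻¹ b) * swap (σ⁻¹ a) (σ⁻¹ y) := by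
      rw [hτ, mul_inv_rev, swap_inv, swap_inv,
        show σ⁻¹ * (swap a b * swap a y) * σ = (σ⁻¹ * swap a b * σ) * (σ⁻¹ * swap a y * σ) by
          group, hswapconjσ, hswapconjσ]
    rw [hLHS, hRHS, hga', hgy', hgb']
    -- now an identity between swaps: p := σ⁻¹ b, q := σ⁻¹ a, r := σ⁻¹ y
    have hpq : σ⁻¹ b ≠ σ⁻¹ a := fun h => hab (σ⁻¹.injective h).symm
    have hpr : σ⁻¹ b ≠ σ⁻¹ y := fun h => hby (σ⁻¹.injective h)
    have hqr : σ⁻¹ a ≠ σ⁻¹ y := fun h => hay (σ⁻¹.injective h)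
    exact swap_cycle_eq hpq hpr hqr
end S3

section S4
variable {α : Type*} [Fintype α] [DecidableEq α]

lemma tau_basic (σ c₁ c₂ : Perm α)
    (h₁ : c₁ ∈ σ.cycleFactorsFinset) (h₂ : c₂ ∈ σ.cycleFactorsFinset) (h12 : c₁ ≠ c₂)
    {a y : α} (ha : a ∈ c₁.support) (hy : y ∈ c₂.support)
    (s : ℕ) (hs0 : 0 < s) (hsm : s < c₁.support.card) :
    (swap a y * swap a ((c₁ ^ s) a)).IsThreeCycle ∧
    (swap a y * swap a ((c₁ ^ s) a)).support = {a, y, (c₁ ^ s) a} ∧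
    (swap a y * swap a ((c₁ ^ s) a)) a = (c₁ ^ s) a ∧
    (swap a y * swap a ((c₁ ^ s) a)) ((c₁ ^ s) a) = y ∧
    (swap a y * swap a ((c₁ ^ s) a)) y = a ∧
    a ≠ (c₁ ^ s) a ∧ a ≠ y ∧ (c₁ ^ s) a ≠ y := by
  classical
  obtain ⟨hc₁, hagree₁⟩ := mem_cycleFactorsFinset_iff.mp h₁
  have hdisj : Disjoint c₁.support c₂.support := by
    have := σ.cycleFactorsFinset_pairwise_disjoint (Finset.mem_coe.mpr h₁)
      (Finset.mem_coe.mpr h₂) h12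
    exact this.disjoint_support
  set b := (c₁ ^ s) a with hbdef
  have hb : b ∈ c₁.support := orb_mem c₁ ha s
  have hyn1 : y ∉ c₁.support := fun h => (Finset.disjoint_left.mp hdisj h) hy
  have hay : a ≠ y := fun h => hyn1 (h ▸ ha)
  have hby : b ≠ y := fun h => hyn1 (h ▸ hb)
  have hab : a ≠ b := by
    intro h
    have h' : (c₁ ^ 0) a = (c₁ ^ s) a := by simpa using h
    have := orb_inj c₁ hc₁ ha (by omega) hsm h'
    omega
  have hτa : (swap a y * swap a b) a = b := by
    rw [mul_apply, swap_apply_left, swap_apply_of_ne_of_ne (Ne.symm hab) hby]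
  have hτb : (swap a y * swap a b) b = y := by
    rw [mul_apply, swap_apply_right, swap_apply_left]
  have hτy : (swap a y * swap a b) y = a := by
    rw [mul_apply, swap_apply_of_ne_of_ne (Ne.symm hay) (Ne.symm hby), swap_apply_right]
  have h3c : IsThreeCycle (swap a y * swap a b) :=
    isThreeCycle_swap_mul_swap_same hay hab (fun h => hby h.symm)
  have hsupp : (swap a y * swap a b).support = {a, y, b} := by
    have hcard := h3c.card_support
    have hma : a ∈ (swap a y * swap a b).support := by
      rw [mem_support, hτa]; exact Ne.symm hab
    have hmy : y ∈ (swap a y * swap a b).support := by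
      rw [mem_support, hτy]; exact hay
    have hmb : b ∈ (swap a y * swap a b).support := by
      rw [mem_support, hτb]; exact Ne.symm hby
    have hsub : ({a, y, b} : Finset α) ⊆ (swap a y * swap a b).support := by
      intro z hz
      simp only [Finset.mem_insert, Finset.mem_singleton] at hz
      rcases hz with h | h | h
      · subst h; exact hma
      · subst h; exact hmy
      · subst h; exact hmb
    have hc3 : ({a, y, b} : Finset α).card = 3 := by
      rw [Finset.card_insert_of_notMem (by simp [hay, hab]),
        Finset.card_insert_of_notMem (Finset.notMem_singleton.mpr (Ne.symm hby)),
        Finset.card_singleton]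
    exact (Finset.eq_of_subset_of_card_le hsub (by omega)).symm
  exact ⟨h3c, hsupp, hτa, hτb, hτy, hab, hay, hby⟩
end S4

end RealHelpers

set_option maxHeartbeats 2000000 in
/-- Lemma: local multiplicity (v): `c₁, c₂` real cycle factors of `σ` with
no fixed points of `γ` in their supports, of even sizes `e′` and `e`; for fixed positive
even `e₁′, e₂′` with `e₁′ + e₂′ = e′`, the number of 3-cycles `τ` meeting the support of
`c₁` in two points and that of `c₂` in one point, with `γ(τσ)γ = (τσ)⁻¹` and such that
`τσ` has exactly two cycle factors inside the union of supports — one of size `e₁′`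
disjoint from the support of `c₂` and one of size `e₂′ + e` containing it — equals `4`. -/
theorem count_real_three_cycles_cut_and_join_even_even
    (d : ℕ) (hd : 1 ≤ d) (σ γ : Perm (Fin d))
    (hγ : γ * γ = 1) (hσ : γ * σ * γ = σ⁻¹)
    (c₁ c₂ : Perm (Fin d)) (e' e e₁' e₂' : ℕ)
    (h₁ : c₁ ∈ σ.cycleFactorsFinset) (h₂ : c₂ ∈ σ.cycleFactorsFinset) (h12 : c₁ ≠ c₂)
    (hre1 : γ * c₁ * γ = c₁⁻¹) (hre2 : γ * c₂ * γ = c₂⁻¹)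
    (hnf1 : ∀ x ∈ c₁.support, γ x ≠ x) (hnf2 : ∀ x ∈ c₂.support, γ x ≠ x)
    (he' : Even e') (he : Even e)
    (hc1 : c₁.support.card = e') (hc2 : c₂.support.card = e)
    (h1pos : 0 < e₁') (h2pos : 0 < e₂') (h1even : Even e₁') (h2even : Even e₂')
    (hsum : e₁' + e₂' = e') :
    Nat.card {τ : Perm (Fin d) // τ.IsThreeCycle ∧
        (τ.support ∩ c₁.support).card = 2 ∧
        (τ.support ∩ c₂.support).card = 1 ∧
        γ * (τ * σ) * γ = (τ * σ)⁻¹ ∧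
        ∃ f₁ f₂ : Perm (Fin d), f₁ ≠ f₂ ∧
          ((τ * σ).cycleFactorsFinset.filter
              fun f => f.support ⊆ c₁.support ∪ c₂.support) = {f₁, f₂} ∧
          f₁.support.card = e₁' ∧ Disjoint f₁.support c₂.support ∧
          f₂.support.card = e₂' + e ∧ c₂.support ⊆ f₂.support} = 4 := by
  classical
  obtain ⟨hc₁, hagree₁⟩ := mem_cycleFactorsFinset_iff.mp h₁
  obtain ⟨hc₂, hagree₂⟩ := mem_cycleFactorsFinset_iff.mp h₂
  have hm2 : 2 ≤ e' := by rw [← hc1]; exact hc₁.two_le_card_support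
  have he2' : 2 ≤ e := by rw [← hc2]; exact hc₂.two_le_card_support
  have he₁2 : 2 ≤ e₁' := by obtain ⟨k, hk⟩ := h1even; omega
  have he₂2 : 2 ≤ e₂' := by obtain ⟨k, hk⟩ := h2even; omega
  have hdisj : Disjoint c₁.support c₂.support := by
    have := σ.cycleFactorsFinset_pairwise_disjoint (Finset.mem_coe.mpr h₁)
      (Finset.mem_coe.mpr h₂) h12
    exact this.disjoint_support
  set F₁ := c₁.support.filter (fun x => γ x = (c₁ ^ (e₂' - 1)) x) with hF₁def
  set F₂ := c₂.support.filter (fun x => γ x = (c₂ ^ (c₂.support.card - 1)) x) with hF₂def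
  have hF₁ : F₁.card = 2 := by
    apply key_count c₁ γ hc₁ hγ hre1 (by rw [hc1]; exact he') hnf1
    · rw [Nat.odd_iff]; obtain ⟨k, hk⟩ := h2even; omega
    · rw [hc1]; omega
  have hF₂ : F₂.card = 2 := by
    apply key_count c₂ γ hc₂ hγ hre2 (by rw [hc2]; exact he) hnf2
    · rw [hc2, Nat.odd_iff]; obtain ⟨k, hk⟩ := he; omega
    · omega
  have hmain : Finset.filter (fun τ : Perm (Fin d) => τ.IsThreeCycle ∧
        (τ.support ∩ c₁.support).card = 2 ∧
        (τ.support ∩ c₂.support).card = 1 ∧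
        γ * (τ * σ) * γ = (τ * σ)⁻¹ ∧
        ∃ f₁ f₂ : Perm (Fin d), f₁ ≠ f₂ ∧
          ((τ * σ).cycleFactorsFinset.filter
              fun f => f.support ⊆ c₁.support ∪ c₂.support) = {f₁, f₂} ∧
          f₁.support.card = e₁' ∧ Disjoint f₁.support c₂.support ∧
          f₂.support.card = e₂' + e ∧ c₂.support ⊆ f₂.support) Finset.univ
      = (F₁ ×ˢ F₂).image (fun p => swap p.1 p.2 * swap p.1 ((c₁ ^ e₂') p.1)) := by
    ext τ
    simp only [Finset.mem_filter, Finset.mem_univ, true_and, Finset.mem_image,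
      Finset.mem_product]
    constructor
    · rintro ⟨h3c, hint1, hint2, hreal, f₁, f₂, hf12, hfilter, hf1c, hf1d, hf2c, hf2s⟩
      have hcard3 : τ.support.card = 3 := h3c.card_support
      have hinterdisj : Disjoint (τ.support ∩ c₁.support) (τ.support ∩ c₂.support) :=
        hdisj.mono Finset.inter_subset_right Finset.inter_subset_right
      have hsub : τ.support ⊆ c₁.support ∪ c₂.support := by
        have hdist : τ.support ∩ (c₁.support ∪ c₂.support)
            = (τ.support ∩ c₁.support) ∪ (τ.support ∩ c₂.support) :=
          Finset.inter_union_distrib_left _ _ _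
        have hcard : (τ.support ∩ (c₁.support ∪ c₂.support)).card = 3 := by
          rw [hdist, Finset.card_union_of_disjoint hinterdisj, hint1, hint2]
        have heq := Finset.eq_of_subset_of_card_le
          (Finset.inter_subset_left :
            τ.support ∩ (c₁.support ∪ c₂.support) ⊆ τ.support)
          (le_of_eq (by rw [hcard, hcard3]))
        exact Finset.inter_eq_left.mp heq
      obtain ⟨a', b', hab', hpair⟩ := Finset.card_eq_two.mp hint1
      obtain ⟨y, hsing⟩ := Finset.card_eq_one.mp hint2
      have ha'τ : a' ∈ τ.support ∧ a' ∈ c₁.support := by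
        have h : a' ∈ τ.support ∩ c₁.support := by rw [hpair]; simp
        exact Finset.mem_inter.mp h
      have hb'τ : b' ∈ τ.support ∧ b' ∈ c₁.support := by
        have h : b' ∈ τ.support ∩ c₁.support := by rw [hpair]; simp
        exact Finset.mem_inter.mp h
      have hyτ : y ∈ τ.support ∧ y ∈ c₂.support := by
        have h : y ∈ τ.support ∩ c₂.support := by rw [hsing]; simp
        exact Finset.mem_inter.mp h
      have hy := hyτ.2
      have hya' : y ≠ a' := fun h => (Finset.disjoint_left.mp hdisj (h ▸ ha'τ.2)) hy
      have hyb' : y ≠ b' := fun h => (Finset.disjoint_left.mp hdisj (h ▸ hb'τ.2)) hy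
      have hsupp : τ.support = {a', b', y} := by
        have hsub2 : ({a', b', y} : Finset (Fin d)) ⊆ τ.support := by
          intro z hz
          simp only [Finset.mem_insert, Finset.mem_singleton] at hz
          rcases hz with h | h | h
          · subst h; exact ha'τ.1
          · subst h; exact hb'τ.1
          · subst h; exact hyτ.1
        have hc3 : ({a', b', y} : Finset (Fin d)).card = 3 := by
          rw [Finset.card_insert_of_notMem (by simp [hab', Ne.symm hya']),
            Finset.card_insert_of_notMem (Finset.notMem_singleton.mpr (Ne.symm hyb')),
            Finset.card_singleton]
        exact (Finset.eq_of_subset_of_card_le hsub2 (by omega)).symm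
      have hmemiff : ∀ z, z ∈ τ.support ↔ (z = a' ∨ z = b' ∨ z = y) := by
        intro z
        rw [hsupp]
        simp
      have hτmem : ∀ z ∈ τ.support, τ z ∈ τ.support := fun z hz => apply_mem_support.mpr hz
      have hτy_ne : τ y ≠ y := mem_support.mp hyτ.1
      have hlab : ∃ a b : Fin d, a ∈ c₁.support ∧ b ∈ c₁.support ∧ τ a = b ∧ τ b = y ∧
          τ y = a ∧ a ≠ b ∧ τ.support = {a, y, b} := by
        rcases (hmemiff (τ a')).mp (hτmem a' ha'τ.1) with h1 | h1 | h1
        · exact absurd h1 (mem_support.mp ha'τ.1)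
        · -- τ a' = b'
          have hτb'2 : τ b' = y := by
            rcases (hmemiff (τ b')).mp (hτmem b' hb'τ.1) with h2 | h2 | h2
            · exfalso
              rcases (hmemiff (τ y)).mp (hτmem y hyτ.1) with h3 | h3 | h3
              · exact hyb' (τ.injective (h3.trans h2.symm))
              · exact hya' (τ.injective (h3.trans h1.symm))
              · exact hτy_ne h3
            · exact absurd h2 (mem_support.mp hb'τ.1)
            · exact h2
          have hτy2 : τ y = a' := by
            rcases (hmemiff (τ y)).mp (hτmem y hyτ.1) with h3 | h3 | h3
            · exact h3
            · exact absurd (τ.injective (h3.trans h1.symm)) hya'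
            · exact absurd h3 hτy_ne
          refine ⟨a', b', ha'τ.2, hb'τ.2, h1, hτb'2, hτy2, hab', ?_⟩
          rw [hsupp]
          ext z
          simp only [Finset.mem_insert, Finset.mem_singleton]
          tauto
        · -- τ a' = y
          have hτy2 : τ y = b' := by
            rcases (hmemiff (τ y)).mp (hτmem y hyτ.1) with h3 | h3 | h3
            · exfalso
              rcases (hmemiff (τ b')).mp (hτmem b' hb'τ.1) with h4 | h4 | h4
              · exact hyb' (τ.injective (h3.trans h4.symm))
              · exact (mem_support.mp hb'τ.1) h4
              · exact hab' (τ.injective (h4.trans h1.symm)).symm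
            · exact h3
            · exact absurd h3 hτy_ne
          have hτb'2 : τ b' = a' := by
            rcases (hmemiff (τ b')).mp (hτmem b' hb'τ.1) with h4 | h4 | h4
            · exact h4
            · exact absurd h4 (mem_support.mp hb'τ.1)
            · exact absurd (τ.injective (h4.trans h1.symm)).symm hab'
          refine ⟨b', a', hb'τ.2, ha'τ.2, hτb'2, h1, hτy2, hab'.symm, ?_⟩
          rw [hsupp]
          ext z
          simp only [Finset.mem_insert, Finset.mem_singleton]
          tauto
      obtain ⟨a, b, hamem, hbmem, hτab, hτby, hτya, habne, hsuppab⟩ := hlab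
      obtain ⟨s, hsm', hsb⟩ := orb_surj c₁ hc₁ hamem hbmem
      have hs0 : 0 < s := by
        rcases Nat.eq_zero_or_pos s with h | h
        · exfalso; apply habne; rw [← hsb, h, pow_zero, Equiv.Perm.one_apply]
        · exact h
      have hτeq : τ = swap a y * swap a ((c₁ ^ s) a) := by
        obtain ⟨h3c', hsupp', hτa', hτb', hτy', hab2, hay2, hby2⟩ :=
          tau_basic σ c₁ c₂ h₁ h₂ h12 hamem hy s hs0 hsm'
        rw [hsb] at hsupp' hτa' hτb' hτy'
        ext z
        rw [hsb]
        by_cases hz : z ∈ τ.support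
        · rw [hsuppab] at hz
          simp only [Finset.mem_insert, Finset.mem_singleton] at hz
          rcases hz with h | h | h
          · subst h; rw [hτab, hτa']
          · subst h; rw [hτya, hτy']
          · subst h; rw [hτby, hτb']
        · have hfix1 := notMem_support.mp hz
          have hz2 : z ∉ (swap a y * swap a b).support := by
            rw [hsupp']
            rw [hsuppab] at hz
            exact hz
          rw [hfix1, notMem_support.mp hz2]
      have hri := reality_iff σ γ c₁ c₂ hγ hσ h₁ h₂ h12 hre1 hre2 hamem hy s hs0 hsm'
      rw [← hτeq] at hri
      obtain ⟨hga, hgy⟩ := hri.mp hreal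
      obtain ⟨B, hBcard, hS₂B, hdeg, hnondeg⟩ :=
        structure_lemma σ c₁ c₂ h₁ h₂ h12 hamem hy s hs0 hsm'
      rw [← hτeq] at hdeg hnondeg
      have hS₂ne : c₂.support.Nonempty := ⟨y, hy⟩
      have hlt : s + 1 < c₁.support.card := by
        by_contra hcon
        have hdeg' := hdeg (by omega)
        rw [hfilter] at hdeg'
        have hf₁B : f₁ = B := by
          have h : f₁ ∈ ({B} : Finset (Perm (Fin d))) := by rw [← hdeg']; simp
          simpa using h
        have hf₂B : f₂ = B := by
          have h : f₂ ∈ ({B} : Finset (Perm (Fin d))) := by rw [← hdeg']; simp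
          simpa using h
        exact hf12 (hf₁B.trans hf₂B.symm)
      obtain ⟨A, hAneB, hfilter', hAcard, hAdisj⟩ := hnondeg hlt
      have hpair2 : ({f₁, f₂} : Finset (Perm (Fin d))) = {A, B} := by
        rw [← hfilter, hfilter']
      have hf₁A : f₁ = A := by
        have hf₁mem : f₁ ∈ ({A, B} : Finset (Perm (Fin d))) := by rw [← hpair2]; simp
        simp only [Finset.mem_insert, Finset.mem_singleton] at hf₁mem
        rcases hf₁mem with h | h
        · exact h
        · exfalso
          obtain ⟨z, hz⟩ := hS₂ne
          exact (Finset.disjoint_left.mp hf1d (h ▸ hS₂B hz)) hz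
      have hseq : s = e₂' := by
        rw [hf₁A, hAcard, hc1] at hf1c
        omega
      subst hseq
      exact ⟨(a, y), ⟨Finset.mem_filter.mpr ⟨hamem, hga⟩,
        Finset.mem_filter.mpr ⟨hy, hgy⟩⟩, hτeq.symm⟩
    · rintro ⟨⟨a, y⟩, ⟨haF, hyF⟩, rfl⟩
      obtain ⟨ha, hga⟩ := Finset.mem_filter.mp haF
      obtain ⟨hy, hgy⟩ := Finset.mem_filter.mp hyF
      have hsm : e₂' < c₁.support.card := by rw [hc1]; omega
      obtain ⟨h3c, hsupp, hτa, hτb, hτy, hab, hay, hby⟩ :=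
        tau_basic σ c₁ c₂ h₁ h₂ h12 ha hy e₂' h2pos hsm
      have hb : (c₁ ^ e₂') a ∈ c₁.support := orb_mem c₁ ha e₂'
      have hyn1 : y ∉ c₁.support := fun h => (Finset.disjoint_left.mp hdisj h) hy
      refine ⟨h3c, ?_, ?_, ?_, ?_⟩
      · have hi1 : (swap a y * swap a ((c₁ ^ e₂') a)).support ∩ c₁.support
            = {a, (c₁ ^ e₂') a} := by
          rw [hsupp]
          ext z
          simp only [Finset.mem_inter, Finset.mem_insert, Finset.mem_singleton]
          constructor
          · rintro ⟨hz1, hz2⟩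
            rcases hz1 with h | h | h
            · exact Or.inl h
            · subst h; exact absurd hz2 hyn1
            · exact Or.inr h
          · rintro (h | h)
            · subst h; exact ⟨Or.inl rfl, ha⟩
            · subst h; exact ⟨Or.inr (Or.inr rfl), hb⟩
        rw [hi1, Finset.card_insert_of_notMem (Finset.notMem_singleton.mpr hab),
          Finset.card_singleton]
      · have hi2 : (swap a y * swap a ((c₁ ^ e₂') a)).support ∩ c₂.support = {y} := by
          rw [hsupp]
          ext z
          simp only [Finset.mem_inter, Finset.mem_insert, Finset.mem_singleton]
          constructor
          · rintro ⟨hz1, hz2⟩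
            rcases hz1 with h | h | h
            · subst h; exact absurd hz2 (fun h' => (Finset.disjoint_left.mp hdisj ha) h')
            · exact h
            · subst h; exact absurd hz2 (fun h' => (Finset.disjoint_left.mp hdisj hb) h')
          · rintro h
            subst h; exact ⟨Or.inr (Or.inl rfl), hy⟩
        rw [hi2, Finset.card_singleton]
      · exact (reality_iff σ γ c₁ c₂ hγ hσ h₁ h₂ h12 hre1 hre2 ha hy e₂' h2pos hsm).mpr
          ⟨hga, hgy⟩
      · obtain ⟨B, hBcard, hS₂B, hdeg, hnondeg⟩ :=
          structure_lemma σ c₁ c₂ h₁ h₂ h12 ha hy e₂' h2pos hsm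
        obtain ⟨A, hAneB, hfilter, hAcard, hAdisj⟩ := hnondeg (by rw [hc1]; omega)
        refine ⟨A, B, hAneB, hfilter, ?_, hAdisj, ?_, hS₂B⟩
        · rw [hAcard, hc1]; omega
        · rw [hBcard, hc2]
  have hinj : Set.InjOn (fun p : Fin d × Fin d => swap p.1 p.2 * swap p.1 ((c₁ ^ e₂') p.1))
      ↑(F₁ ×ˢ F₂) := by
    rintro ⟨a, y⟩ hp ⟨a', y'⟩ hp' heq
    rw [Finset.mem_coe, Finset.mem_product] at hp hp'
    obtain ⟨ha, hga⟩ := Finset.mem_filter.mp hp.1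
    obtain ⟨hy, hgy⟩ := Finset.mem_filter.mp hp.2
    obtain ⟨ha', hga'⟩ := Finset.mem_filter.mp hp'.1
    obtain ⟨hy', hgy'⟩ := Finset.mem_filter.mp hp'.2
    simp only at heq
    have hsm : e₂' < c₁.support.card := by rw [hc1]; omega
    obtain ⟨h3c1, hsupp1, hτa1, hτb1, hτy1, hab1, hay1, hby1⟩ :=
      tau_basic σ c₁ c₂ h₁ h₂ h12 ha hy e₂' h2pos hsm
    obtain ⟨h3c2, hsupp2, hτa2, hτb2, hτy2, hab2, hay2, hby2⟩ :=
      tau_basic σ c₁ c₂ h₁ h₂ h12 ha' hy' e₂' h2pos hsm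
    have hse : ({a, y, (c₁ ^ e₂') a} : Finset (Fin d)) = {a', y', (c₁ ^ e₂') a'} := by
      rw [← hsupp1, ← hsupp2, heq]
    have hyy : y = y' := by
      have hm : y ∈ ({a', y', (c₁ ^ e₂') a'} : Finset (Fin d)) := by rw [← hse]; simp
      simp only [Finset.mem_insert, Finset.mem_singleton] at hm
      rcases hm with h | h | h
      · exact absurd hy (fun hh => (Finset.disjoint_left.mp hdisj (h ▸ ha')) hh)
      · exact h
      · exact absurd hy (fun hh => (Finset.disjoint_left.mp hdisj
          (h ▸ orb_mem c₁ ha' e₂')) hh)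
    have haa : a = a' := by
      have hm : a ∈ ({a', y', (c₁ ^ e₂') a'} : Finset (Fin d)) := by rw [← hse]; simp
      simp only [Finset.mem_insert, Finset.mem_singleton] at hm
      rcases hm with h | h | h
      · exact h
      · exact absurd ha (fun hh => (Finset.disjoint_left.mp hdisj hh) (h ▸ hy'))
      · exfalso
        have h1 : (swap a' y' * swap a' ((c₁ ^ e₂') a')) a = y' := by rw [h, hτb2]
        rw [← heq, hτa1] at h1
        exact (Finset.disjoint_left.mp hdisj (orb_mem c₁ ha e₂')) (h1 ▸ hy')
    simp only [Prod.mk.injEq]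
    exact ⟨haa, hyy⟩
  rw [Nat.card_eq_fintype_card, Fintype.card_subtype, hmain,
    Finset.card_image_of_injOn hinj, Finset.card_product, hF₁, hF₂]
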